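/- Every function f on T^n_α with e_α f continuous and |sin α|-periodic is a uniform limit of trigonometric polynomials of order α (fractional Weierstrass approximation theorem). -/

import Mathlib

open MeasureTheory Filter

noncomputable section

/-- The fractional torus, realized as the cube `[-|sin α|/2, |sin α|/2]^n`. -/
def Tor (α : ℝ) (n : ℕ) : Set (Fin n → ℝ) :=
  Set.univ.pi fun _ => Set.Icc (-(|Real.sin α| / 2)) (|Real.sin α| / 2)

/-- The chirp `e_α(x) = e^{π i |x|² cot α}`. -/
def eA (α : ℝ) {n : ℕ} (x : Fin n → ℝ) : ℂ :=
  Complex.exp (Complex.I * ((Real.pi * (∑ i, x i ^ 2) * (Real.cos α / Real.sin α) : ℝ) : ℂ))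

/-- `A_α = √(1 - i cot α)`. -/
def Acoef (α : ℝ) : ℂ := (1 - Complex.I * ((Real.cos α / Real.sin α : ℝ) : ℂ)) ^ (1 / 2 : ℂ)

/-- The kernel `K_α(m,x) = A_α^n e_α(x) e^{-2π i (m·x) csc α} e_α(m)`. -/
def Kk (α : ℝ) {n : ℕ} (m : Fin n → ℤ) (x : Fin n → ℝ) : ℂ :=
  Acoef α ^ n * eA α x *
    Complex.exp (-(Complex.I * ((2 * Real.pi * (∑ i, (m i : ℝ) * x i) / Real.sin α : ℝ) : ℂ))) *
    eA α fun i => (m i : ℝ)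

/-- The `m`-th fractional Fourier coefficient of order `α`. -/
def Fcoef (α : ℝ) {n : ℕ} (f : (Fin n → ℝ) → ℂ) (m : Fin n → ℤ) : ℂ :=
  ∫ x in Tor α n, f x * Kk α m x

/-- `|sin α|`-periodicity in every coordinate. -/
def Per (α : ℝ) {n : ℕ} (f : (Fin n → ℝ) → ℂ) : Prop :=
  ∀ (x : Fin n → ℝ) (k : Fin n → ℤ), f (fun i => x i + k i * |Real.sin α|) = f x

namespace Stmt12Aux

open AddCircle Submodule Set ContinuousMap

variable {T : ℝ} {n : ℕ}

/-- Multidimensional character on the product of circles. -/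
def mchar (m : Fin n → ℤ) : C((Fin n → AddCircle T), ℂ) :=
  ∏ i, (fourier (m i)).comp ⟨fun y => y i, continuous_apply i⟩

theorem mchar_apply (m : Fin n → ℤ) (y : Fin n → AddCircle T) :
    mchar m y = ∏ i, fourier (m i) (y i) := by
  simp [mchar]

theorem mchar_zero : (mchar 0 : C((Fin n → AddCircle T), ℂ)) = 1 := by
  ext y
  simp [mchar_apply, fourier_zero]

theorem mchar_add (m m' : Fin n → ℤ) :
    (mchar (m + m') : C((Fin n → AddCircle T), ℂ)) = mchar m * mchar m' := by
  ext y
  simp only [mchar_apply, ContinuousMap.mul_apply, ← Finset.prod_mul_distrib]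
  exact Finset.prod_congr rfl fun i _ => by simpa using (fourier_add (m := m i) (n := m' i))

theorem mchar_neg (m : Fin n → ℤ) :
    (mchar (-m) : C((Fin n → AddCircle T), ℂ)) = star (mchar m) := by
  ext y
  simp only [mchar_apply, ContinuousMap.star_apply]
  calc ∏ i, fourier ((-m) i) (y i)
      = ∏ i, (starRingEnd ℂ) (fourier (m i) (y i)) :=
        Finset.prod_congr rfl fun i _ => by
          rw [Pi.neg_apply]; exact fourier_neg
    _ = (starRingEnd ℂ) (∏ i, fourier (m i) (y i)) := (map_prod _ _ _).symm
    _ = star (∏ i, fourier (m i) (y i)) := rfl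

/-- The star subalgebra generated by the multidimensional characters. -/
def mSubalg : StarSubalgebra ℂ C((Fin n → AddCircle T), ℂ) where
  toSubalgebra := Algebra.adjoin ℂ (range (mchar (T := T) (n := n)))
  star_mem' := by
    show Algebra.adjoin ℂ (range (mchar (T := T) (n := n))) ≤
      star (Algebra.adjoin ℂ (range (mchar (T := T) (n := n))))
    refine Algebra.adjoin_le ?_
    rintro - ⟨m, rfl⟩
    exact Algebra.subset_adjoin ⟨-m, mchar_neg m⟩

theorem mSubalg_coe :
    Subalgebra.toSubmodule (mSubalg (T := T) (n := n)).toSubalgebra =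
      span ℂ (range (mchar (T := T) (n := n))) := by
  apply Algebra.adjoin_eq_span_of_subset
  refine Subset.trans ?_ Submodule.subset_span
  intro x hx
  refine Submonoid.closure_induction (fun _ => id) ⟨0, mchar_zero⟩ ?_ hx
  rintro - - - - ⟨m, rfl⟩ ⟨m', rfl⟩
  exact ⟨m + m', mchar_add m m'⟩

variable [hT : Fact (0 < T)]

theorem mSubalg_separatesPoints : (mSubalg (T := T) (n := n)).SeparatesPoints := by
  intro y y' hyy'
  obtain ⟨i, hi⟩ : ∃ i, y i ≠ y' i := by
    by_contra h
    push_neg at h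
    exact hyy' (funext h)
  refine ⟨_, ⟨mchar (Pi.single i 1), Algebra.subset_adjoin ⟨Pi.single i 1, rfl⟩, rfl⟩, ?_⟩
  have key : ∀ z : Fin n → AddCircle T, mchar (Pi.single i 1) z = toCircle (z i) := by
    intro z
    rw [mchar_apply, Finset.prod_eq_single i (fun j _ hj => by
      simp [Pi.single_eq_of_ne hj, fourier_zero]) (by simp)]
    simp [Pi.single_eq_same, fourier_one]
  dsimp only
  rw [key, key]
  contrapose! hi
  rw [Circle.coe_inj] at hi
  exact injective_toCircle hT.elim.ne' hi

theorem mSubalg_closure_eq_top : (mSubalg (T := T) (n := n)).topologicalClosure = ⊤ :=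
  ContinuousMap.starSubalgebra_topologicalClosure_eq_top_of_separatesPoints _
    mSubalg_separatesPoints

theorem span_mchar_closure_eq_top :
    (span ℂ (range (mchar (T := T) (n := n)))).topologicalClosure = ⊤ := by
  rw [← mSubalg_coe]
  exact congr_arg (Subalgebra.toSubmodule <| StarSubalgebra.toSubalgebra ·)
    mSubalg_closure_eq_top

end Stmt12Aux

theorem stmt12 (α : ℝ) (hα : ∀ k : ℤ, α ≠ k * Real.pi) (n : ℕ)
    (f : (Fin n → ℝ) → ℂ)
    (hper : Per α fun x => eA α x * f x)
    (hc : Continuous fun x => eA α x * f x)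
    (ε : ℝ) (hε : 0 < ε) :
    ∃ (s : Finset (Fin n → ℤ)) (c : (Fin n → ℤ) → ℂ),
      ∀ x ∈ Tor α n, ‖f x - ∑ m ∈ s, c m * Kk (-α) m x‖ < ε := by
  classical
  have hsin : Real.sin α ≠ 0 := by
    intro h
    rcases Real.sin_eq_zero_iff.mp h with ⟨k, hk⟩
    exact hα k hk.symm
  set L : ℝ := |Real.sin α| with hL_def
  have hL : 0 < L := abs_pos.mpr hsin
  haveI : Fact (0 < L) := ⟨hL⟩
  -- the quotient map onto the product of circles
  set q : (Fin n → ℝ) → (Fin n → AddCircle L) := fun x i => (x i : AddCircle L) with hq_def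
  have hq : IsOpenQuotientMap q :=
    IsOpenQuotientMap.piMap fun _ => QuotientAddGroup.isOpenQuotientMap_mk
  set g : (Fin n → ℝ) → ℂ := fun x => eA α x * f x with hg_def
  -- descend g to the product of circles
  set G : (Fin n → AddCircle L) → ℂ := fun y => g (fun i => (y i).out) with hG_def
  have hrep : ∀ x : Fin n → ℝ, ∃ k : Fin n → ℤ,
      (fun i => ((x i : AddCircle L)).out) = fun i => x i + k i * L := by
    intro x
    have h : ∀ i, ∃ k : ℤ, ((x i : AddCircle L)).out = x i + k * L := by
      intro i
      have h1 : ((((x i : AddCircle L)).out : ℝ) : AddCircle L) = (x i : AddCircle L) :=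
        Quot.out_eq _
      rw [QuotientAddGroup.eq] at h1
      rcases AddSubgroup.mem_zmultiples_iff.mp h1 with ⟨k, hk⟩
      refine ⟨-k, ?_⟩
      have : k • L = -((x i : AddCircle L)).out + x i := hk
      rw [zsmul_eq_mul] at this
      push_cast
      linarith
    choose k hk using h
    exact ⟨k, funext hk⟩
  have hGq : ∀ x, G (q x) = g x := by
    intro x
    obtain ⟨k, hk⟩ := hrep x
    show g (fun i => ((x i : AddCircle L)).out) = g x
    rw [hk]
    exact hper x k
  have hGcont : Continuous G := by
    rw [hq.isQuotientMap.continuous_iff]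
    have : G ∘ q = g := funext hGq
    rw [this]
    exact hc
  -- approximate G by a finite linear combination of characters
  set Gc : C((Fin n → AddCircle L), ℂ) := ⟨G, hGcont⟩ with hGc_def
  have hmem : Gc ∈ (Submodule.span ℂ
      (Set.range (Stmt12Aux.mchar (T := L) (n := n)))).topologicalClosure := by
    rw [Stmt12Aux.span_mchar_closure_eq_top]
    trivial
  rw [← SetLike.mem_coe, Submodule.topologicalClosure_coe] at hmem
  rcases Metric.mem_closure_iff.mp hmem ε hε with ⟨F, hF_mem, hF_dist⟩
  rcases Finsupp.mem_span_range_iff_exists_finsupp.mp hF_mem with ⟨d, hd⟩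
  -- the sign of sin α
  set σ : ℤ := if 0 < Real.sin α then 1 else -1 with hσ_def
  have hσsq : σ * σ = 1 := by
    by_cases h : 0 < Real.sin α <;> simp [hσ_def, h]
  have hsinσ : Real.sin α = (σ : ℝ) * L := by
    by_cases h : 0 < Real.sin α
    · simp [hσ_def, h, hL_def, abs_of_pos h]
    · have h' : Real.sin α < 0 := lt_of_le_of_ne (not_lt.mp h) hsin
      simp [hσ_def, h, hL_def, abs_of_neg h']
  have hσr : (σ : ℝ) ≠ 0 := by
    by_cases h : 0 < Real.sin α <;> simp [hσ_def, h]
  set ι : (Fin n → ℤ) → (Fin n → ℤ) := fun m i => σ * m i with hι_def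
  have hιι : ∀ m, ι (ι m) = m := by
    intro m
    funext i
    show σ * (σ * m i) = m i
    rw [← mul_assoc, hσsq, one_mul]
  have hι_inj : Function.Injective ι := Function.Involutive.injective hιι
  -- nonvanishing facts
  have hA0 : Acoef (-α) ≠ 0 := by
    have hz : ∀ r : ℝ, (1 - Complex.I * (r : ℂ)) ≠ 0 := by
      intro r h
      have h2 := congrArg Complex.re h
      simp [Complex.sub_re, Complex.mul_re] at h2
    rw [Acoef, Complex.cpow_def_of_ne_zero (hz _)]
    exact Complex.exp_ne_zero _
  have hAn : Acoef (-α) ^ n ≠ 0 := pow_ne_zero _ hA0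
  -- the coefficients
  refine ⟨(d.support).image ι, fun m =>
    d (ι m) / (Acoef (-α) ^ n * eA (-α) (fun i => ((m i : ℤ) : ℝ))), ?_⟩
  intro x hx
  -- compute the character values
  have hchar : ∀ m : Fin n → ℤ, Stmt12Aux.mchar (T := L) m (q x) =
      Complex.exp (∑ i, 2 * Real.pi * Complex.I * (m i) * (x i) / L) := by
    intro m
    rw [Stmt12Aux.mchar_apply, Complex.exp_sum]
    exact Finset.prod_congr rfl fun i _ => fourier_coe_apply
  -- key per-term identity
  have hterm : ∀ m : Fin n → ℤ,
      (d (ι (ι m)) / (Acoef (-α) ^ n * eA (-α) (fun i => (((ι m) i : ℤ) : ℝ)))) *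
        Kk (-α) (ι m) x = d m * (eA (-α) x * Stmt12Aux.mchar (T := L) m (q x)) := by
    intro m
    rw [hιι m, hchar m, Kk]
    have hexp : -(Complex.I * ((2 * Real.pi * (∑ i, ((ι m i : ℤ) : ℝ) * x i) / Real.sin (-α) : ℝ) : ℂ))
        = ∑ i, 2 * Real.pi * Complex.I * (m i) * (x i) / L := by
      have hsum : (∑ i, ((ι m i : ℤ) : ℝ) * x i) = (σ : ℝ) * ∑ i, ((m i : ℤ) : ℝ) * x i := by
        rw [Finset.mul_sum]
        refine Finset.sum_congr rfl fun i _ => ?_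
        show ((σ * m i : ℤ) : ℝ) * x i = (σ : ℝ) * (((m i : ℤ) : ℝ) * x i)
        push_cast; ring
      have hreal : 2 * Real.pi * ((σ : ℝ) * ∑ i, ((m i : ℤ) : ℝ) * x i) / (-((σ : ℝ) * L))
          = -(2 * Real.pi * (∑ i, ((m i : ℤ) : ℝ) * x i) / L) := by
        field_simp
      have hrhs : (∑ i, 2 * Real.pi * Complex.I * (m i) * (x i) / L)
          = 2 * Real.pi * Complex.I * (((∑ i, ((m i : ℤ) : ℝ) * x i : ℝ)) : ℂ) / L := by
        rw [← Finset.sum_div, Complex.ofReal_sum, Finset.mul_sum]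
        congr 1
        refine Finset.sum_congr rfl fun i _ => ?_
        push_cast; ring
      rw [hrhs, hsum, Real.sin_neg, hsinσ, hreal]
      push_cast
      ring
    rw [hexp]
    set E := eA (-α) (fun i => (((ι m) i : ℤ) : ℝ)) with hE_def
    have hE0 : E ≠ 0 := Complex.exp_ne_zero _
    field_simp
  -- rewrite the sum
  have hsum_eq : ∑ m ∈ (d.support).image ι,
      (d (ι m) / (Acoef (-α) ^ n * eA (-α) (fun i => ((m i : ℤ) : ℝ)))) * Kk (-α) m x
      = eA (-α) x * ∑ m ∈ d.support, d m * Stmt12Aux.mchar (T := L) m (q x) := by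
    rw [Finset.sum_image (fun a _ b _ h => hι_inj h)]
    rw [Finset.mul_sum]
    refine Finset.sum_congr rfl fun m _ => ?_
    rw [hterm m]
    ring
  -- f x in terms of G
  have hee : eA (-α) x * eA α x = 1 := by
    rw [eA, eA, ← Complex.exp_add, ← Complex.exp_zero]
    congr 1
    have : Real.pi * (∑ i, x i ^ 2) * (Real.cos (-α) / Real.sin (-α))
        = -(Real.pi * (∑ i, x i ^ 2) * (Real.cos α / Real.sin α)) := by
      rw [Real.cos_neg, Real.sin_neg, div_neg]; ring
    rw [this]
    push_cast
    ring
  have hfx : f x = eA (-α) x * G (q x) := by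
    rw [hGq x, hg_def]
    calc f x = (eA (-α) x * eA α x) * f x := by rw [hee, one_mul]
    _ = eA (-α) x * (eA α x * f x) := by ring
  -- evaluate F
  have hFval : F (q x) = ∑ m ∈ d.support, d m * Stmt12Aux.mchar (T := L) m (q x) := by
    rw [← hd]
    rw [Finsupp.sum]
    simp
  -- norm of the chirp is 1
  have hnorm : ‖eA (-α) x‖ = 1 := by
    have key : ∀ r : ℝ, ‖Complex.exp (Complex.I * (r : ℂ))‖ = 1 := by
      intro r
      rw [Complex.norm_exp]
      simp [Complex.mul_re]
    exact key _
  calc ‖f x - ∑ m ∈ (d.support).image ι,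
        (d (ι m) / (Acoef (-α) ^ n * eA (-α) (fun i => ((m i : ℤ) : ℝ)))) * Kk (-α) m x‖
      = ‖eA (-α) x * (G (q x) - F (q x))‖ := by
        rw [hsum_eq, hfx, hFval, mul_sub]
    _ = ‖G (q x) - F (q x)‖ := by rw [norm_mul, hnorm, one_mul]
    _ ≤ dist Gc F := by
        rw [← dist_eq_norm]
        exact show dist (Gc (q x)) (F (q x)) ≤ dist Gc F from
          ContinuousMap.dist_apply_le_dist (q x)
    _ < ε := hF_dist
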